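/- arXiv:1907.07697 — 2 statements merged into one kernel-verified Lean document; each statement's English description precedes it below -/
import Mathlib

section
/- For M(p²) = M³/(p² + m²) + μ with M³, m², μ real and M³ + m²μ = 0 (and m² > 0), the mass function satisfies M(0) = 0, and the integral (4/π)∫₀^∞ p²[M(p²) − 2p² ∂_{p²}M(p²)]/(p² + M(p²)²)² dp equals 0, provided p² + M(p²)² > 0 for all p > 0. -/
open Real

/-- For `M(s) = M³/(s + m²) + μ` with `M³ + m²μ = 0` and `m² > 0`, one has `M 0 = 0`
and the winding-number integral `(4/π)∫₀^∞ p²[M(p²) − 2p² M'(p²)]/(p² + M(p²)²)² dp`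
equals `0`, provided `p² + M(p²)² > 0` for all `p > 0`.  Here `M3` denotes the single
real parameter `M³` and `msq` denotes `m²`. -/
theorem N3_eq_zero_on_phase_boundary (M3 msq μ : ℝ) (hm : 0 < msq)
    (hrel : M3 + msq * μ = 0) (M : ℝ → ℝ) (hMdef : ∀ s : ℝ, M s = M3 / (s + msq) + μ)
    (hpos : ∀ p : ℝ, 0 < p → 0 < p ^ 2 + (M (p ^ 2)) ^ 2) :
    M 0 = 0 ∧
    (4 / π) * ∫ p in Set.Ioi (0 : ℝ),
      p ^ 2 * (M (p ^ 2) - 2 * p ^ 2 * deriv M (p ^ 2))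
        / (p ^ 2 + (M (p ^ 2)) ^ 2) ^ 2 = 0 := by
  have hM3 : M3 = -(msq * μ) := by linarith
  have hM0 : M 0 = 0 := by
    rw [hMdef 0, hM3]; field_simp; ring
  refine ⟨hM0, ?_⟩
  set g : ℝ → ℝ := fun p =>
    μ * (p ^ 2 - msq) * (p ^ 2 + msq) ^ 2 / ((p ^ 2 + msq) ^ 2 + μ ^ 2 * p ^ 2) ^ 2 with hg
  set A : ℝ → ℝ := fun p =>
    -(1 / 2) * (arctan (μ * p / (p ^ 2 + msq)) +
      μ * p * (p ^ 2 + msq) / ((p ^ 2 + msq) ^ 2 + μ ^ 2 * p ^ 2)) with hA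
  have ha : ∀ p : ℝ, 0 < p ^ 2 + msq := fun p => by positivity
  have hD : ∀ p : ℝ, 0 < (p ^ 2 + msq) ^ 2 + μ ^ 2 * p ^ 2 := fun p => by
    have := ha p; positivity
  -- A has derivative g everywhere
  have hderiv : ∀ p : ℝ, HasDerivAt A (g p) p := by
    intro p
    have hap : (p ^ 2 + msq) ≠ 0 := (ha p).ne'
    have hDp : ((p ^ 2 + msq) ^ 2 + μ ^ 2 * p ^ 2) ≠ 0 := (hD p).ne'
    have hd1 : HasDerivAt (fun x : ℝ => x ^ 2 + msq) (2 * p) p := by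
      simpa using (hasDerivAt_pow 2 p).add_const msq
    have hn1 : HasDerivAt (fun x : ℝ => μ * x) μ p := by
      simpa using (hasDerivAt_id p).const_mul μ
    have hu : HasDerivAt (fun x => μ * x / (x ^ 2 + msq))
        ((μ * (p ^ 2 + msq) - μ * p * (2 * p)) / (p ^ 2 + msq) ^ 2) p := hn1.div hd1 hap
    have harct := hu.arctan
    have hn2 : HasDerivAt (fun x : ℝ => μ * x * (x ^ 2 + msq))
        (μ * (p ^ 2 + msq) + μ * p * (2 * p)) p := hn1.mul hd1
    have hd2 : HasDerivAt (fun x : ℝ => (x ^ 2 + msq) ^ 2 + μ ^ 2 * x ^ 2)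
        (2 * (p ^ 2 + msq) * (2 * p) + μ ^ 2 * (2 * p)) p := by
      have h1 := hd1.pow 2
      have h2 := (hasDerivAt_pow 2 p).const_mul (μ ^ 2)
      refine (h1.add h2).congr_deriv ?_
      push_cast; ring
    have ht := hn2.div hd2 hDp
    have hsum := (harct.add ht).const_mul (-(1 / 2) : ℝ)
    refine hsum.congr_deriv ?_
    symm
    rw [hg]
    set q : ℝ := p ^ 2 + msq with hqdef
    set D : ℝ := q ^ 2 + μ ^ 2 * p ^ 2 with hDdef
    have h1p : (1 : ℝ) + (μ * p / q) ^ 2 ≠ 0 := by positivity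
    field_simp
    rw [hDdef, hqdef]
    ring
  -- A tends to 0 at infinity
  have hlim : Filter.Tendsto A Filter.atTop (nhds 0) := by
    have hinv : Filter.Tendsto (fun p : ℝ => |μ| / p) Filter.atTop (nhds 0) :=
      Filter.Tendsto.div_atTop tendsto_const_nhds Filter.tendsto_id
    have hu : Filter.Tendsto (fun p : ℝ => μ * p / (p ^ 2 + msq)) Filter.atTop (nhds 0) := by
      apply squeeze_zero_norm' _ hinv
      filter_upwards [Filter.eventually_gt_atTop (0 : ℝ)] with p hp
      rw [Real.norm_eq_abs, abs_div, abs_of_pos (ha p), abs_mul, abs_of_pos hp]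
      rw [div_le_div_iff₀ (ha p) hp]
      have e : p ^ 2 ≤ p ^ 2 + msq := by linarith
      calc |μ| * p * p = |μ| * p ^ 2 := by ring
        _ ≤ |μ| * (p ^ 2 + msq) := mul_le_mul_of_nonneg_left e (abs_nonneg μ)
    have ht1 : Filter.Tendsto (fun p : ℝ => arctan (μ * p / (p ^ 2 + msq)))
        Filter.atTop (nhds 0) := by
      have := (Real.continuous_arctan.tendsto 0).comp hu
      simpa [Function.comp_def] using this
    have ht2 : Filter.Tendsto
        (fun p : ℝ => μ * p * (p ^ 2 + msq) / ((p ^ 2 + msq) ^ 2 + μ ^ 2 * p ^ 2))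
        Filter.atTop (nhds 0) := by
      apply squeeze_zero_norm' _ hinv
      filter_upwards [Filter.eventually_gt_atTop (0 : ℝ)] with p hp
      rw [Real.norm_eq_abs, abs_div, abs_of_pos (hD p), abs_mul, abs_mul,
        abs_of_pos hp, abs_of_pos (ha p)]
      rw [div_le_div_iff₀ (hD p) hp]
      have e : p ^ 2 * (p ^ 2 + msq) ≤ (p ^ 2 + msq) ^ 2 + μ ^ 2 * p ^ 2 := by
        nlinarith [sq_nonneg (μ * p), sq_nonneg p, hm]
      calc |μ| * p * (p ^ 2 + msq) * p = |μ| * (p ^ 2 * (p ^ 2 + msq)) := by ring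
        _ ≤ |μ| * ((p ^ 2 + msq) ^ 2 + μ ^ 2 * p ^ 2) :=
            mul_le_mul_of_nonneg_left e (abs_nonneg μ)
    have hfin := (ht1.add ht2).const_mul (-(1 / 2) : ℝ)
    rw [hA]
    simpa using hfin
  -- g is integrable on Ioi 0
  have hgint : MeasureTheory.IntegrableOn g (Set.Ioi (0 : ℝ)) := by
    have hgcont : Continuous g := by
      apply Continuous.div (by fun_prop) (by fun_prop)
      intro p
      exact pow_ne_zero 2 (hD p).ne'
    set c : ℝ := min 1 msq with hc
    have hc0 : 0 < c := lt_min one_pos hm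
    have hbound : MeasureTheory.Integrable (fun p : ℝ => |μ| / c * (1 + p ^ 2)⁻¹) :=
      integrable_inv_one_add_sq.const_mul _
    apply MeasureTheory.Integrable.mono' hbound.integrableOn
      hgcont.aestronglyMeasurable.restrict
    apply MeasureTheory.ae_of_all
    intro p
    have h1 : |g p| ≤ |μ| / (p ^ 2 + msq) := by
      rw [hg]
      rw [abs_div, abs_of_pos (pow_pos (hD p) 2), abs_mul, abs_mul,
        abs_of_pos (pow_pos (ha p) 2)]
      rw [div_le_div_iff₀ (pow_pos (hD p) 2) (ha p)]
      have habs : |p ^ 2 - msq| ≤ p ^ 2 + msq := by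
        rw [abs_le]; constructor <;> nlinarith [sq_nonneg p]
      have e1 : |μ| * |p ^ 2 - msq| ≤ |μ| * (p ^ 2 + msq) :=
        mul_le_mul_of_nonneg_left habs (abs_nonneg μ)
      have e2 : (p ^ 2 + msq) ^ 2 ≤ (p ^ 2 + msq) ^ 2 + μ ^ 2 * p ^ 2 := by
        nlinarith [sq_nonneg (μ * p)]
      calc |μ| * |p ^ 2 - msq| * (p ^ 2 + msq) ^ 2 * (p ^ 2 + msq)
          = (|μ| * |p ^ 2 - msq|) * (p ^ 2 + msq) ^ 3 := by ring
        _ ≤ (|μ| * (p ^ 2 + msq)) * (p ^ 2 + msq) ^ 3 :=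
            mul_le_mul_of_nonneg_right e1 (by positivity)
        _ = |μ| * ((p ^ 2 + msq) ^ 2) ^ 2 := by ring
        _ ≤ |μ| * ((p ^ 2 + msq) ^ 2 + μ ^ 2 * p ^ 2) ^ 2 := by
            exact mul_le_mul_of_nonneg_left
              (pow_le_pow_left₀ (by positivity) e2 2) (abs_nonneg μ)
    refine h1.trans ?_
    have hrw : |μ| / c * (1 + p ^ 2)⁻¹ = |μ| / (c * (1 + p ^ 2)) := by
      rw [division_def, mul_assoc, ← mul_inv, ← division_def]
    rw [hrw, div_le_div_iff₀ (ha p) (by positivity)]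
    have h2 : c ≤ 1 := min_le_left _ _
    have h3 : c ≤ msq := min_le_right _ _
    have e : c * (1 + p ^ 2) ≤ p ^ 2 + msq := by nlinarith [sq_nonneg p, hc0.le]
    calc |μ| * (c * (1 + p ^ 2)) ≤ |μ| * (p ^ 2 + msq) :=
          mul_le_mul_of_nonneg_left e (abs_nonneg μ)
      _ = |μ| * (p ^ 2 + msq) := rfl
  -- fundamental theorem of calculus
  have hA0 : A 0 = 0 := by simp [hA]
  have key : ∫ p in Set.Ioi (0 : ℝ), g p = 0 := by
    have := MeasureTheory.integral_Ioi_of_hasDerivAt_of_tendsto'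
      (f := A) (f' := g) (a := 0) (m := 0) (fun x _ => hderiv x) hgint hlim
    rw [this, hA0, sub_zero]
  -- rewrite original integrand as g on Ioi 0
  have hcongr : ∫ p in Set.Ioi (0 : ℝ),
      p ^ 2 * (M (p ^ 2) - 2 * p ^ 2 * deriv M (p ^ 2))
        / (p ^ 2 + (M (p ^ 2)) ^ 2) ^ 2 = ∫ p in Set.Ioi (0 : ℝ), g p := by
    apply MeasureTheory.setIntegral_congr_fun measurableSet_Ioi
    intro p hp
    have hp0 : (0 : ℝ) < p := hp
    have hs : (0 : ℝ) < p ^ 2 + msq := ha p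
    have hMfun : M = fun s => M3 / (s + msq) + μ := funext hMdef
    have hM' : deriv M (p ^ 2) = -M3 / (p ^ 2 + msq) ^ 2 := by
      have hd1 : HasDerivAt (fun s : ℝ => s + msq) 1 (p ^ 2) := by
        simpa using (hasDerivAt_id (p ^ 2)).add_const msq
      have hdd : HasDerivAt (fun s : ℝ => M3 / (s + msq) + μ)
          ((0 * (p ^ 2 + msq) - M3 * 1) / (p ^ 2 + msq) ^ 2) (p ^ 2) :=
        ((hasDerivAt_const (p ^ 2) M3).div hd1 hs.ne').add_const μ
      rw [hMfun, hdd.deriv]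
      ring
    have hden := hpos p hp0
    show p ^ 2 * (M (p ^ 2) - 2 * p ^ 2 * deriv M (p ^ 2))
        / (p ^ 2 + (M (p ^ 2)) ^ 2) ^ 2 = g p
    rw [hg, hM', hMdef (p ^ 2)]
    rw [hMdef (p ^ 2)] at hden
    rw [hM3] at hden ⊢
    set q : ℝ := p ^ 2 + msq with hqdef
    have hq0 : q ≠ 0 := hs.ne'
    have hden' : p ^ 2 + (-(msq * μ) / q + μ) ^ 2 ≠ 0 := hden.ne'
    have hD0 : (q ^ 2 + μ ^ 2 * p ^ 2) ≠ 0 := by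
      have := hD p; rw [← hqdef] at this; exact this.ne'
    field_simp
    rw [hqdef]
    ring
  rw [hcongr, key, mul_zero]
end

section
/- For the mass function M(s) = M³/(s + m²) + μ with M³ = −1, m² = 1, μ = 1 (in arbitrary units), the winding-number integral (4/π)∫₀^∞ p²[M(p²) − 2p² M'(p²)]/(p² + M(p²)²)² dp equals 0. -/
open Real MeasureTheory Filter Set Topology

noncomputable def g (p : ℝ) : ℝ := (p^6 + p^4 - p^2 - 1) / (p^4 + 3*p^2 + 1)^2

noncomputable def F (p : ℝ) : ℝ :=
  if p = 0 then π/4 else -(p^3 + p) / (2*(p^4 + 3*p^2 + 1)) + arctan (p + p⁻¹) / 2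

lemma qpos (p : ℝ) : 0 < p^4 + 3*p^2 + 1 := by positivity

lemma hasDerivAt_F {p : ℝ} (hp : 0 < p) : HasDerivAt F (g p) p := by
  have hq := (qpos p).ne'
  have hp' := hp.ne'
  have h1 : HasDerivAt (fun x : ℝ => -(x^3 + x) / (2*(x^4 + 3*x^2 + 1)))
      ((-(3*p^2+1) * (2*(p^4+3*p^2+1)) - (-(p^3+p)) * (2*(4*p^3+6*p)))
        / (2*(p^4+3*p^2+1))^2) p := by
    apply HasDerivAt.div
    · exact (((hasDerivAt_pow 3 p).add (hasDerivAt_id p)).neg).congr_deriv (by ring)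
    · exact ((((hasDerivAt_pow 4 p).add (((hasDerivAt_pow 2 p).const_mul 3))).add_const 1).const_mul 2).congr_deriv (by ring)
    · positivity
  have hu : HasDerivAt (fun x : ℝ => x + x⁻¹) (1 + -(p^2)⁻¹) p :=
    (hasDerivAt_id p).add (hasDerivAt_inv hp')
  have h2 : HasDerivAt (fun x : ℝ => arctan (x + x⁻¹) / 2)
      ((1/(1+(p+p⁻¹)^2) * (1 + -(p^2)⁻¹)) / 2) p :=
    by have := ((Real.hasDerivAt_arctan (p + p⁻¹)).comp p hu).div_const 2; exact this
  have key : HasDerivAt (fun x : ℝ => -(x^3 + x) / (2*(x^4 + 3*x^2 + 1)) + arctan (x + x⁻¹) / 2)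
      (g p) p := by
    have h := h1.fun_add h2
    refine h.congr_deriv ?_
    have h1p : (1:ℝ) + (p+p⁻¹)^2 ≠ 0 := by positivity
    unfold g
    field_simp
    ring
  apply key.congr_of_eventuallyEq
  filter_upwards [eventually_ne_nhds hp'] with x hx
  simp [F, hx]

lemma g_cont : Continuous g := by
  unfold g
  fun_prop (disch := intro x; positivity)

lemma g_int : IntegrableOn g (Ioi (0:ℝ)) := by
  apply (integrable_inv_one_add_sq.restrict (s := Ioi 0)).mono g_cont.aestronglyMeasurable.restrict
  refine Eventually.of_forall fun p => ?_
  have h1 : (0:ℝ) < 1 + p^2 := by positivity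
  rw [norm_inv, Real.norm_eq_abs, Real.norm_eq_abs, abs_of_pos h1, g, abs_div,
    abs_of_pos (by positivity : (0:ℝ) < (p^4+3*p^2+1)^2), div_le_iff₀ (by positivity),
    inv_mul_eq_div, le_div_iff₀ h1]
  have h2 : |p^6 + p^4 - p^2 - 1| ≤ (1+p^2)^3 := by
    rw [abs_le]; constructor <;> nlinarith [sq_nonneg p, sq_nonneg (p^2-1), pow_pos (by positivity : (0:ℝ) < 1+p^2) 3, sq_nonneg (p^3)]
  calc |p^6 + p^4 - p^2 - 1| * (1+p^2) ≤ (1+p^2)^3 * (1+p^2) := by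
        apply mul_le_mul_of_nonneg_right h2 h1.le
    _ = ((1+p^2)^2)^2 := by ring
    _ ≤ (p^4+3*p^2+1)^2 := by
        apply pow_le_pow_left₀ (by positivity) (by nlinarith [sq_nonneg p]) 2

lemma F_tendsto_top : Tendsto F atTop (𝓝 (π/4)) := by
  have hG : Tendsto (fun x : ℝ => (-x - x^3)/(2*(1+3*x^2+x^4))) (𝓝 0) (𝓝 0) := by
    have : ContinuousAt (fun x : ℝ => (-x - x^3)/(2*(1+3*x^2+x^4))) 0 :=
      ContinuousAt.div (by fun_prop) (by fun_prop) (by norm_num)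
    simpa using this.tendsto
  have h1 : Tendsto (fun p : ℝ => -(p^3 + p) / (2*(p^4 + 3*p^2 + 1))) atTop (𝓝 0) := by
    apply (hG.comp tendsto_inv_atTop_zero).congr'
    filter_upwards [eventually_gt_atTop (0:ℝ)] with p hp
    have := qpos p
    simp only [Function.comp_apply]
    field_simp
    ring
  have hinner : Tendsto (fun p : ℝ => p + p⁻¹) atTop atTop :=
    tendsto_id.atTop_add tendsto_inv_atTop_zero
  have h2 : Tendsto (fun p : ℝ => arctan (p + p⁻¹) / 2) atTop (𝓝 (π/4)) := by
    have := ((tendsto_arctan_atTop.mono_right nhdsWithin_le_nhds).comp hinner).div_const 2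
    have e : π/2/2 = π/4 := by ring
    rwa [e] at this
  have h := h1.add h2
  rw [zero_add] at h
  apply h.congr'
  filter_upwards [eventually_gt_atTop (0:ℝ)] with p hp
  simp [F, hp.ne']

lemma F_tendsto_zero : Tendsto F (𝓝[>] (0:ℝ)) (𝓝 (π/4)) := by
  have h1 : Tendsto (fun p : ℝ => -(p^3 + p) / (2*(p^4 + 3*p^2 + 1))) (𝓝[>] 0) (𝓝 0) := by
    have : ContinuousAt (fun p : ℝ => -(p^3 + p) / (2*(p^4 + 3*p^2 + 1))) 0 := by
      apply ContinuousAt.div (by fun_prop) (by fun_prop) (by norm_num)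
    simpa using this.tendsto.mono_left nhdsWithin_le_nhds
  have hinner : Tendsto (fun p : ℝ => p + p⁻¹) (𝓝[>] (0:ℝ)) atTop :=
    Filter.Tendsto.add_atTop ((continuous_id.tendsto 0).mono_left nhdsWithin_le_nhds)
      tendsto_inv_nhdsGT_zero
  have h2 : Tendsto (fun p : ℝ => arctan (p + p⁻¹) / 2) (𝓝[>] (0:ℝ)) (𝓝 (π/4)) := by
    have := ((tendsto_arctan_atTop.mono_right nhdsWithin_le_nhds).comp hinner).div_const 2
    have e : π/2/2 = π/4 := by ring
    rwa [e] at this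
  have h := h1.add h2
  rw [zero_add] at h
  apply h.congr'
  filter_upwards [self_mem_nhdsWithin] with p hp
  simp [F, (ne_of_gt (mem_Ioi.mp hp))]

/-- For `M(s) = −1/(s+1) + 1` (that is, `M³ = −1`, `m² = 1`, `μ = 1`), the
winding-number integral `(4/π)∫₀^∞ p²[M(p²) − 2p² M'(p²)]/(p² + M(p²)²)² dp = 0`. -/
theorem N3_eq_zero_example :
    (4 / π) * ∫ p in Set.Ioi (0 : ℝ),
      p ^ 2 * ((fun s : ℝ => -1 / (s + 1) + 1) (p ^ 2)
          - 2 * p ^ 2 * deriv (fun s : ℝ => -1 / (s + 1) + 1) (p ^ 2))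
        / (p ^ 2 + ((fun s : ℝ => -1 / (s + 1) + 1) (p ^ 2)) ^ 2) ^ 2 = 0 := by
  have hI : (∫ p in Set.Ioi (0 : ℝ),
      p ^ 2 * ((fun s : ℝ => -1 / (s + 1) + 1) (p ^ 2)
          - 2 * p ^ 2 * deriv (fun s : ℝ => -1 / (s + 1) + 1) (p ^ 2))
        / (p ^ 2 + ((fun s : ℝ => -1 / (s + 1) + 1) (p ^ 2)) ^ 2) ^ 2) = ∫ p in Set.Ioi (0:ℝ), g p := by
    apply setIntegral_congr_fun measurableSet_Ioi
    intro p hp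
    have hp : (0:ℝ) < p := hp
    have hs : (0:ℝ) < p^2 + 1 := by positivity
    have hd : deriv (fun s : ℝ => -1 / (s + 1) + 1) (p ^ 2) = 1/(p^2+1)^2 := by
      have : HasDerivAt (fun s : ℝ => -1 / (s + 1) + 1)
          ((0 * (p^2+1) - (-1) * 1) / (p^2+1)^2) (p^2) := by
        exact (((hasDerivAt_const (p^2) (-1)).div ((hasDerivAt_id (p^2)).add_const 1) hs.ne').add_const 1)
      rw [this.deriv]; field_simp; ring
    simp only [hd]
    have hM : (0:ℝ) < p^2 + (-1/(p^2+1) + 1)^2 :=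
      add_pos_of_pos_of_nonneg (by positivity) (sq_nonneg _)
    unfold g
    rw [div_eq_div_iff (by positivity) (by positivity)]
    field_simp
    ring
  rw [hI]
  have hF0 : F 0 = π/4 := by simp [F]
  have hcont : ContinuousWithinAt F (Ici 0) 0 := by
    rw [← Set.Ioi_insert, continuousWithinAt_insert_self]
    rw [ContinuousWithinAt, hF0]
    exact F_tendsto_zero
  rw [integral_Ioi_of_hasDerivAt_of_tendsto hcont (fun x hx => hasDerivAt_F hx) g_int F_tendsto_top, hF0]
  ring
end
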